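/- The merge map for the finite powerset functor is a minimization interface: defining merge : B(1) → B(1) by merge(ℓ)(*) = min(1, ℓ(*)), we have merge ∘ fil_S ∘ ♭_X = fil_{{1}} ∘ ♭_2 ∘ P_f(χ_S) for all sets X and subsets S ⊆ X. -/

import Mathlib

open scoped Classical

/-- Filter map `fil_S : B(A × X) → B(A)`, `fil_S(f)(a) = Σ_{x ∈ S} f(a,x)`. -/
noncomputable def fil {A X : Type} (S : Set X) (f : (A × X) →₀ ℕ) : A →₀ ℕ :=
  f.sum fun p n => if p.2 ∈ S then Finsupp.single p.1 n else 0

/-- Characteristic function `χ_S : X → 2`, where `2 = Bool` with `true = 1`. -/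
noncomputable def chi {X : Type} (S : Set X) : X → Bool :=
  fun x => if x ∈ S then true else false

/-- `group = curry ∘ B(swap) : B(A × X) → (B A)^(X)`. -/
noncomputable def bagGroup {A X : Type} (f : (A × X) →₀ ℕ) : X →₀ (A →₀ ℕ) :=
  Finsupp.finsuppProdEquiv (Finsupp.mapDomain Prod.swap f)

/-- `ungroup = B(swap) ∘ uncurry : (B A)^(X) → B(A × X)`. -/
noncomputable def bagUngroup {A X : Type} (g : X →₀ (A →₀ ℕ)) : (A × X) →₀ ℕ :=
  Finsupp.mapDomain Prod.swap (Finsupp.finsuppProdEquiv.symm g)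

/-- Encoding of the finite powerset functor: `♭_X(t)(*,x) = 1` iff `x ∈ t`. -/
noncomputable def flatP {X : Type} (t : Finset X) : (Unit × X) →₀ ℕ :=
  t.sum fun x => Finsupp.single ((), x) 1

/-- `merge` for the finite powerset functor: `merge(ℓ)(*) = min(1, ℓ(*))`. -/
noncomputable def mergeP (ℓ : Unit →₀ ℕ) : Unit →₀ ℕ :=
  Finsupp.single () (min 1 (ℓ ()))

lemma fil_add {A X : Type} (S : Set X) (f g : (A × X) →₀ ℕ) :
    fil S (f + g) = fil S f + fil S g := by
  unfold fil
  apply Finsupp.sum_add_index' <;> intro p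
  · simp
  · intro a b; split <;> simp [Finsupp.single_add]

lemma fil_flatP {X : Type} (S : Set X) (t : Finset X) :
    fil S (flatP t) = Finsupp.single () ((t.filter (fun x => x ∈ S)).card) := by
  classical
  induction t using Finset.induction_on with
  | empty => simp [flatP, fil]
  | insert a s h ih =>
    rw [flatP, Finset.sum_insert h, ← flatP, fil_add, ih]
    rw [Finset.filter_insert]
    have : fil S (Finsupp.single ((), a) 1) = if a ∈ S then Finsupp.single () 1 else 0 := by
      simp [fil, Finsupp.sum_single_index]
    rw [this]
    split
    · rw [Finset.card_insert_of_notMem (by simp [h]), ← Finsupp.single_add, add_comm]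
    · simp

/-- `mergeP` is a minimization interface for the finite powerset
functor. -/
theorem mergeP_minimization_interface (X : Type) (S : Set X) (t : Finset X) :
    mergeP (fil S (flatP t)) = fil {true} (flatP (t.image (chi S))) := by
  classical
  rw [fil_flatP, fil_flatP, mergeP, Finsupp.single_eq_same]
  simp only [Set.mem_singleton_iff]
  congr 1
  by_cases hst : ∃ x ∈ t, x ∈ S
  · have h1 : ((t.image (chi S)).filter (fun x => x = true)) = {true} := by
      ext b
      simp only [Finset.mem_filter, Finset.mem_image, Finset.mem_singleton]
      constructor
      · rintro ⟨_, hb⟩; exact hb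
      · rintro rfl
        obtain ⟨x, hx, hxS⟩ := hst
        exact ⟨⟨x, hx, by simp [chi, hxS]⟩, rfl⟩
    rw [h1]
    have h2 : 0 < (t.filter (fun x => x ∈ S)).card := by
      obtain ⟨x, hx, hxS⟩ := hst
      exact Finset.card_pos.mpr ⟨x, Finset.mem_filter.mpr ⟨hx, hxS⟩⟩
    simp only [Finset.card_singleton]
    omega
  · have h1 : ((t.image (chi S)).filter (fun x => x = true)) = ∅ := by
      ext b
      simp only [Finset.mem_filter, Finset.mem_image, Finset.notMem_empty, iff_false, not_and]
      rintro ⟨x, hx, hb⟩ rfl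
      exact hst ⟨x, hx, by simpa [chi] using hb⟩
    have h2 : (t.filter (fun x => x ∈ S)) = ∅ := by
      ext x; simp only [Finset.mem_filter, Finset.notMem_empty, iff_false, not_and]
      exact fun hx hS => hst ⟨x, hx, hS⟩
    rw [h1, h2]; simp
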